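/- If y(0) is a nonnegative function, then the solution y(·,t) of ∂_t y = Ay remains nonnegative almost everywhere for all t ≥ 0; more generally, ess inf y(·,0) ≤ y(x,t) ≤ ess sup y(·,0) for a.e. x and all t ≥ 0. -/

import Mathlib

open MeasureTheory

set_option maxHeartbeats 2000000
set_option synthInstance.maxHeartbeats 400000

theorem maximum_principle (d : ℕ) (Ω : Set (Fin d → ℝ))
    (hΩo : IsOpen Ω) (hΩb : Bornology.IsBounded Ω)
    (μ : Measure (Fin d → ℝ)) (hμ : μ = volume.restrict Ω)
    (hprob : μ Set.univ = 1)
    (σ : (Fin d → ℝ) → (Fin d → ℝ) → ℝ)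
    (hσmeas : Measurable (Function.uncurry σ))
    (hσnonneg : ∀ x xs, 0 ≤ σ x xs)
    (C : ℝ) (hσbd : ∀ x xs, σ x xs ≤ C)
    (A : Lp ℝ 2 μ →L[ℝ] Lp ℝ 2 μ)
    (hA : ∀ z : Lp ℝ 2 μ,
      (A z : (Fin d → ℝ) → ℝ) =ᵐ[μ] fun x => ∫ xs, σ x xs * (z xs - z x) ∂μ)
    (y0 : Lp ℝ 2 μ) :
    ((∀ᵐ x ∂μ, 0 ≤ y0 x) →
      ∀ t : ℝ, 0 ≤ t → ∀ᵐ x ∂μ, 0 ≤ (NormedSpace.exp (t • A) y0) x) ∧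
    (∀ a b : ℝ, (∀ᵐ x ∂μ, a ≤ y0 x ∧ y0 x ≤ b) →
      ∀ t : ℝ, 0 ≤ t →
        ∀ᵐ x ∂μ, a ≤ (NormedSpace.exp (t • A) y0) x ∧
          (NormedSpace.exp (t • A) y0) x ≤ b) := by
  haveI : Fact ((1:ENNReal) ≤ 2) := ⟨by norm_num⟩
  haveI hPM : IsProbabilityMeasure μ := ⟨hprob⟩
  have hC0 : 0 ≤ C := le_trans (hσnonneg 0 0) (hσbd 0 0)
  set B : Lp ℝ 2 μ →L[ℝ] Lp ℝ 2 μ := A + C • (1 : Lp ℝ 2 μ →L[ℝ] Lp ℝ 2 μ) with hBdef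
  -- B is positivity preserving
  have hBpos : ∀ z : Lp ℝ 2 μ, 0 ≤ z → 0 ≤ B z := by
    intro z hz
    rw [← Lp.coeFn_nonneg] at hz ⊢
    have hzint : Integrable (z : (Fin d → ℝ) → ℝ) μ := (Lp.memLp z).integrable (by norm_num)
    have hBzeq : B z = A z + C • z := by
      simp [hBdef, ContinuousLinearMap.add_apply, ContinuousLinearMap.smul_apply,
        ContinuousLinearMap.one_apply]
    have hBz : (B z : (Fin d → ℝ) → ℝ) =ᵐ[μ] fun x => (A z) x + C * z x := by
      rw [hBzeq]
      filter_upwards [Lp.coeFn_add (A z) (C • z), Lp.coeFn_smul C z] with x hx1 hx2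
      simp only [hx1, hx2, Pi.add_apply, Pi.smul_apply, smul_eq_mul]
    filter_upwards [hBz, hA z, hz] with x hBx hAx hzx
    rw [Pi.zero_apply] at hzx ⊢
    rw [hBx, hAx]
    have hσm : Measurable fun xs => σ x xs := hσmeas.comp measurable_prodMk_left
    have hσint : Integrable (fun xs => σ x xs) μ := by
      refine (integrable_const C).mono' hσm.aestronglyMeasurable ?_
      filter_upwards with xs
      rw [Real.norm_eq_abs, abs_of_nonneg (hσnonneg x xs)]
      exact hσbd x xs
    have hprod : Integrable (fun xs => σ x xs * z xs) μ := by
      refine (hzint.norm.const_mul C).mono'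
        (hσm.aestronglyMeasurable.mul (Lp.aestronglyMeasurable z)) ?_
      filter_upwards with xs
      rw [Real.norm_eq_abs, abs_mul, abs_of_nonneg (hσnonneg x xs)]
      exact mul_le_mul_of_nonneg_right (hσbd x xs) (abs_nonneg _)
    have hsplit : ∫ xs, σ x xs * (z xs - z x) ∂μ
        = (∫ xs, σ x xs * z xs ∂μ) - (∫ xs, σ x xs ∂μ) * z x := by
      have hpt : ∀ xs, σ x xs * (z xs - z x) = σ x xs * z xs - σ x xs * z x := fun xs => by ring
      simp_rw [hpt]
      rw [integral_sub hprod (hσint.mul_const (z x)), integral_mul_const]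
    rw [hsplit]
    have h1 : 0 ≤ ∫ xs, σ x xs * z xs ∂μ := by
      refine integral_nonneg_of_ae ?_
      filter_upwards [hz] with xs hxs
      exact mul_nonneg (hσnonneg x xs) hxs
    have h2 : (∫ xs, σ x xs ∂μ) ≤ C := by
      calc (∫ xs, σ x xs ∂μ) ≤ ∫ _, C ∂μ :=
            integral_mono hσint (integrable_const C) fun xs => hσbd x xs
        _ = C := by simp
    nlinarith [mul_le_mul_of_nonneg_right h2 hzx]
  -- nonneg scalar smul preserves positivity
  have hsmul_nn : ∀ (c : ℝ), 0 ≤ c → ∀ w : Lp ℝ 2 μ, 0 ≤ w → 0 ≤ c • w := by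
    intro c hc w hw
    rw [← Lp.coeFn_nonneg] at hw ⊢
    filter_upwards [Lp.coeFn_smul c w, hw] with x hx hwx
    rw [Pi.zero_apply] at hwx ⊢
    rw [hx, Pi.smul_apply, smul_eq_mul]
    exact mul_nonneg hc hwx
  -- exp of t • B is positivity preserving
  have hexp_pos : ∀ t : ℝ, 0 ≤ t → ∀ w : Lp ℝ 2 μ, 0 ≤ w →
      0 ≤ NormedSpace.exp (t • B) w := by
    intro t ht w hw
    have hTpos : ∀ n : ℕ, ∀ v : Lp ℝ 2 μ, 0 ≤ v → 0 ≤ ((t • B) ^ n) v := by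
      intro n
      induction n with
      | zero => intro v hv; simpa using hv
      | succ n ih =>
        intro v hv
        rw [pow_succ, ContinuousLinearMap.mul_apply]
        refine ih _ ?_
        rw [ContinuousLinearMap.smul_apply]
        exact hsmul_nn t ht _ (hBpos v hv)
    have hrw : NormedSpace.exp (t • B) = ∑' n : ℕ, ((n.factorial : ℝ))⁻¹ • (t • B) ^ n := by
      rw [NormedSpace.exp_eq_tsum ℝ]
    have hsum : Summable fun n : ℕ => ((n.factorial : ℝ))⁻¹ • (t • B) ^ n :=
      NormedSpace.expSeries_summable' (𝕂 := ℝ) (t • B)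
    have happ := (ContinuousLinearMap.apply ℝ (Lp ℝ 2 μ) w).map_tsum hsum
    simp only [ContinuousLinearMap.apply_apply] at happ
    rw [hrw, happ]
    refine tsum_nonneg fun n => ?_
    rw [ContinuousLinearMap.smul_apply]
    exact hsmul_nn _ (by positivity) _ (hTpos n w hw)
  -- split the exponential
  have hsplit : ∀ t : ℝ, NormedSpace.exp (t • A)
      = NormedSpace.exp (t • B) *
        (Real.exp (-(t * C)) • (1 : Lp ℝ 2 μ →L[ℝ] Lp ℝ 2 μ)) := by
    intro t
    have hdecomp : t • A = t • B + (-(t * C)) • (1 : Lp ℝ 2 μ →L[ℝ] Lp ℝ 2 μ) := by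
      rw [hBdef, smul_add, smul_smul, neg_smul]
      abel
    have hcomm : Commute (t • B) ((-(t * C)) • (1 : Lp ℝ 2 μ →L[ℝ] Lp ℝ 2 μ)) :=
      (Commute.one_right (t • B)).smul_right _
    rw [hdecomp, NormedSpace.exp_add_of_commute_of_mem_ball (𝕂 := ℝ) hcomm
      ((NormedSpace.expSeries_radius_eq_top ℝ (Lp ℝ 2 μ →L[ℝ] Lp ℝ 2 μ)).symm ▸ edist_lt_top _ _)
      ((NormedSpace.expSeries_radius_eq_top ℝ (Lp ℝ 2 μ →L[ℝ] Lp ℝ 2 μ)).symm ▸ edist_lt_top _ _)]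
    congr 1
    have halg : ((-(t * C)) • (1 : Lp ℝ 2 μ →L[ℝ] Lp ℝ 2 μ))
        = algebraMap ℝ (Lp ℝ 2 μ →L[ℝ] Lp ℝ 2 μ) (-(t * C)) :=
      (Algebra.algebraMap_eq_smul_one _).symm
    rw [halg, ← NormedSpace.algebraMap_exp_comm, Algebra.algebraMap_eq_smul_one,
      ← Real.exp_eq_exp_ℝ]
  -- main positivity statement
  have hmain : ∀ t : ℝ, 0 ≤ t → ∀ w : Lp ℝ 2 μ, 0 ≤ w →
      0 ≤ NormedSpace.exp (t • A) w := by
    intro t ht w hw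
    rw [hsplit t, ContinuousLinearMap.mul_apply, ContinuousLinearMap.smul_apply,
      ContinuousLinearMap.one_apply]
    exact hexp_pos t ht _ (hsmul_nn _ (Real.exp_pos _).le _ hw)
  constructor
  · intro hy0 t ht
    have hw : 0 ≤ y0 := by
      rw [← Lp.coeFn_nonneg]
      filter_upwards [hy0] with x hx
      simpa using hx
    have h := hmain t ht y0 hw
    rw [← Lp.coeFn_nonneg] at h
    filter_upwards [h] with x hx
    simpa using hx
  · intro a b hab t ht
    have hone_mem : MemLp (fun _ : Fin d → ℝ => (1:ℝ)) 2 μ := memLp_const 1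
    set one : Lp ℝ 2 μ := hone_mem.toLp _ with honedef
    have hone : (one : (Fin d → ℝ) → ℝ) =ᵐ[μ] fun _ => (1:ℝ) := hone_mem.coeFn_toLp
    have hAone : A one = 0 := by
      apply Lp.ext
      have h0 : (fun x => ∫ xs, σ x xs * (one xs - one x) ∂μ)
          =ᵐ[μ] (0 : (Fin d → ℝ) → ℝ) := by
        filter_upwards [hone] with x hx
        rw [Pi.zero_apply, hx]
        apply integral_eq_zero_of_ae
        filter_upwards [hone] with xs hxs
        rw [hxs]
        simp
      exact ((hA one).trans h0).trans (Lp.coeFn_zero ℝ 2 μ).symm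
    have hpow0 : ∀ n : ℕ, ((t • A) ^ (n + 1)) one = 0 := by
      intro n
      rw [pow_succ, ContinuousLinearMap.mul_apply, ContinuousLinearMap.smul_apply, hAone]
      rw [smul_zero, map_zero]
    have hexp_one : NormedSpace.exp (t • A) one = one := by
      have hrw : NormedSpace.exp (t • A) = ∑' n : ℕ, ((n.factorial : ℝ))⁻¹ • (t • A) ^ n := by
        rw [NormedSpace.exp_eq_tsum ℝ]
      have hsum : Summable fun n : ℕ => ((n.factorial : ℝ))⁻¹ • (t • A) ^ n :=
        NormedSpace.expSeries_summable' (𝕂 := ℝ) (t • A)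
      have happ := (ContinuousLinearMap.apply ℝ (Lp ℝ 2 μ) one).map_tsum hsum
      simp only [ContinuousLinearMap.apply_apply] at happ
      rw [hrw, happ]
      rw [tsum_eq_single 0 ?_]
      · simp
      · intro n hn
        obtain ⟨m, rfl⟩ := Nat.exists_eq_succ_of_ne_zero hn
        rw [ContinuousLinearMap.smul_apply, hpow0 m, smul_zero]
    have hge : 0 ≤ y0 - a • one := by
      rw [← Lp.coeFn_nonneg]
      filter_upwards [hab, hone, Lp.coeFn_sub y0 (a • one), Lp.coeFn_smul a one]
        with x hx h1 h2 h3
      rw [Pi.zero_apply, h2, Pi.sub_apply, h3, Pi.smul_apply, h1, smul_eq_mul, mul_one]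
      linarith [hx.1]
    have hle : 0 ≤ b • one - y0 := by
      rw [← Lp.coeFn_nonneg]
      filter_upwards [hab, hone, Lp.coeFn_sub (b • one) y0, Lp.coeFn_smul b one]
        with x hx h1 h2 h3
      rw [Pi.zero_apply, h2, Pi.sub_apply, h3, Pi.smul_apply, h1, smul_eq_mul, mul_one]
      linarith [hx.2]
    have H1 := hmain t ht _ hge
    have H2 := hmain t ht _ hle
    rw [map_sub, _root_.map_smul, hexp_one] at H1 H2
    rw [← Lp.coeFn_nonneg] at H1 H2
    filter_upwards [H1, H2, hone,
      Lp.coeFn_sub (NormedSpace.exp (t • A) y0) (a • one), Lp.coeFn_smul a one,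
      Lp.coeFn_sub (b • one) (NormedSpace.exp (t • A) y0), Lp.coeFn_smul b one]
      with x h1 h2 h3 h4 h5 h6 h7
    rw [Pi.zero_apply, h4, Pi.sub_apply, h5, Pi.smul_apply, h3, smul_eq_mul, mul_one] at h1
    rw [Pi.zero_apply, h6, Pi.sub_apply, h7, Pi.smul_apply, h3, smul_eq_mul, mul_one] at h2
    constructor <;> linarith
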